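/- Let c ≥ 2 and K₀ ≥ 1 be integers and let ε > 0 be a constant such that every continuous ε-light map from [0,1]^c to ℝ^c has a stable value. Let {U_α}_{α ∈ A} be a finite family of closed boxes U_α = ∏_{i=1}^{c} [p_{α,i}, q_{α,i}] ⊆ [−1,2]^c, each of diameter strictly less than ε, such that: for each i ∈ {1,…,c} the numbers {p_{α,i} : α ∈ A} ∪ {q_{α,i} : α ∈ A} are pairwise distinct, and every x ∈ [0,1]^c lies in the interiors of at least cK₀ + 1 boxes U_α whose frontiers are pairwise disjoint. For each i set B_i = {p_{α,i} : α ∈ A} ∪ {q_{α,i} : α ∈ A}. Let φ : [−1,2]^c → ℝ^c be a continuous map such that for every i ∈ {1,…,c} and every subset B ⊆ B_i containing exactly K₀ elements, ⋂_{r ∈ B} φ([−1,2]^{i−1} × {r} × [−1,2]^{c−i}) = ∅. Then the restriction of φ to [0,1]^c has a stable value. -/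

import Mathlib

/-- A point `y` is a *stable value* of the continuous map `f : X → Y` if there is `ε > 0`
such that `y` is in the range of every continuous map `g` that is pointwise `ε`-close to `f`. -/
def IsStableValue {X Y : Type*} [MetricSpace X] [MetricSpace Y] (f : X → Y) (y : Y) : Prop :=
  ∃ ε > (0 : ℝ), ∀ g : X → Y, Continuous g → (∀ x, dist (f x) (g x) < ε) → y ∈ Set.range g

/-- A map `f : X → Y` is *`ε`-light* if for every `y ∈ Y` every connected component of the
fiber `f⁻¹ {y}` has diameter strictly less than `ε`. -/
def IsLightMap {X Y : Type*} [MetricSpace X] [MetricSpace Y] (f : X → Y) (ε : ℝ) : Prop :=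
  ∀ (y : Y), ∀ x ∈ f ⁻¹' {y},
    EMetric.diam (connectedComponentIn (f ⁻¹' {y}) x) < ENNReal.ofReal ε

/-- The unit cube `[0,1]^c` in `ℝ^c`. -/
abbrev UnitCube (c : ℕ) : Type :=
  {x : EuclideanSpace ℝ (Fin c) // ∀ i, x i ∈ Set.Icc (0 : ℝ) 1}

/-- The cube `[-1,2]^c` in `ℝ^c`. -/
abbrev BigCube (c : ℕ) : Type :=
  {x : EuclideanSpace ℝ (Fin c) // ∀ i, x i ∈ Set.Icc (-1 : ℝ) 2}

/-- Restriction of a map on `[-1,2]^c` to the unit cube `[0,1]^c`. -/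
def restrictToUnitCube {c : ℕ} (φ : BigCube c → EuclideanSpace ℝ (Fin c)) :
    UnitCube c → EuclideanSpace ℝ (Fin c) :=
  fun x => φ ⟨x.1, fun i => ⟨by linarith [(x.2 i).1], by linarith [(x.2 i).2]⟩⟩

/-- The closed box `∏ᵢ [pᵢ, qᵢ]` in `ℝ^c`. -/
def closedBox {c : ℕ} (p q : Fin c → ℝ) : Set (EuclideanSpace ℝ (Fin c)) :=
  {x | ∀ i, x i ∈ Set.Icc (p i) (q i)}

lemma myClosedBox_isClosed {c : ℕ} (p q : Fin c → ℝ) : IsClosed (closedBox p q) := by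
  have : closedBox p q = ⋂ i, (fun x : EuclideanSpace ℝ (Fin c) => x i) ⁻¹' Set.Icc (p i) (q i) := by
    ext x; simp [closedBox, Set.mem_iInter]
  rw [this]
  exact isClosed_iInter fun i => isClosed_Icc.preimage (EuclideanSpace.proj i).continuous

lemma myOpenBox_isOpen {c : ℕ} (p q : Fin c → ℝ) :
    IsOpen {x : EuclideanSpace ℝ (Fin c) | ∀ i, x i ∈ Set.Ioo (p i) (q i)} := by
  have : {x : EuclideanSpace ℝ (Fin c) | ∀ i, x i ∈ Set.Ioo (p i) (q i)}
      = ⋂ i, (fun x : EuclideanSpace ℝ (Fin c) => x i) ⁻¹' Set.Ioo (p i) (q i) := by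
    ext x; simp [Set.mem_iInter]
  rw [this]
  exact isOpen_iInter_of_finite fun i => isOpen_Ioo.preimage (EuclideanSpace.proj i).continuous

lemma mem_frontier_closedBox {c : ℕ} {p q : Fin c → ℝ} {z : EuclideanSpace ℝ (Fin c)}
    (hz : z ∈ frontier (closedBox p q)) :
    (∀ i, z i ∈ Set.Icc (p i) (q i)) ∧ ∃ i, z i = p i ∨ z i = q i := by
  have h1 : z ∈ closedBox p q := by
    have := hz.1
    rwa [(myClosedBox_isClosed p q).closure_eq] at this
  refine ⟨h1, ?_⟩
  have h2 : z ∉ {x : EuclideanSpace ℝ (Fin c) | ∀ i, x i ∈ Set.Ioo (p i) (q i)} := by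
    intro h
    exact hz.2 ((myOpenBox_isOpen p q).subset_interior_iff.2 (fun w hw i => Set.Ioo_subset_Icc_self (hw i)) h)
  simp only [Set.mem_setOf_eq, not_forall] at h2
  obtain ⟨i, hi⟩ := h2
  refine ⟨i, ?_⟩
  rcases (h1 i).1.eq_or_lt with h | h
  · exact Or.inl h.symm
  rcases (h1 i).2.eq_or_lt with h' | h'
  · exact Or.inr h'
  · exact absurd ⟨h, h'⟩ hi

lemma preconnected_inter_frontier {X : Type*} [TopologicalSpace X] {S U : Set X}
    (hS : IsPreconnected S) (hU : IsClosed U) {a b : X} (ha : a ∈ S) (ha' : a ∈ interior U)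
    (hb : b ∈ S) (hb' : b ∉ U) : (S ∩ frontier U).Nonempty := by
  by_contra h
  rw [Set.not_nonempty_iff_eq_empty] at h
  have hsub : S ⊆ interior U ∪ (closure U)ᶜ := by
    intro s hs
    by_cases hcl : s ∈ closure U
    · left
      by_contra hint
      exact Set.eq_empty_iff_forall_notMem.1 h s ⟨hs, hcl, hint⟩
    · exact Or.inr hcl
  obtain ⟨w, _, hw1, hw2⟩ := hS _ _ isOpen_interior isClosed_closure.isOpen_compl hsub
    ⟨a, ha, ha'⟩ ⟨b, hb, fun hcb => hb' (hU.closure_eq ▸ hcb)⟩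
  exact hw2 (subset_closure (interior_subset hw1))

/-- Criterion for a stable value: if every continuous `ε`-light map `[0,1]^c → ℝ^c` has a
stable value, `{U_α}` is a finite family of closed boxes in `[-1,2]^c` of diameter `< ε`
with pairwise distinct endpoints in each coordinate, such that every point of `[0,1]^c`
lies in the interiors of at least `cK₀ + 1` boxes with pairwise disjoint frontiers, and if
`φ : [-1,2]^c → ℝ^c` is a continuous map such that for every coordinate `i` and every set
`B` of `K₀` endpoint values the images of the corresponding coordinate slices have empty
intersection, then `φ` restricted to `[0,1]^c` has a stable value. -/
theorem stmt9 (c K₀ : ℕ) (hc : 2 ≤ c) (hK₀ : 1 ≤ K₀) (ε : ℝ) (hε : 0 < ε)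
    (hlight : ∀ g : UnitCube c → EuclideanSpace ℝ (Fin c),
      Continuous g → IsLightMap g ε → ∃ y, IsStableValue g y)
    (n : ℕ) (p q : Fin n → Fin c → ℝ)
    (hbox : ∀ α i, -1 ≤ p α i ∧ p α i < q α i ∧ q α i ≤ 2)
    (hdiam : ∀ α, EMetric.diam (closedBox (p α) (q α)) < ENNReal.ofReal ε)
    (hdistinct : ∀ i : Fin c, ∀ α β : Fin n,
      (α ≠ β → p α i ≠ p β i ∧ q α i ≠ q β i) ∧ p α i ≠ q β i)
    (hcover : ∀ x : EuclideanSpace ℝ (Fin c), (∀ i, x i ∈ Set.Icc (0 : ℝ) 1) →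
      ∃ I : Finset (Fin n), c * K₀ + 1 ≤ I.card ∧
        (∀ α ∈ I, x ∈ interior (closedBox (p α) (q α))) ∧
        (∀ α ∈ I, ∀ β ∈ I, α ≠ β →
          Disjoint (frontier (closedBox (p α) (q α))) (frontier (closedBox (p β) (q β)))))
    (φ : BigCube c → EuclideanSpace ℝ (Fin c)) (hφ : Continuous φ)
    (hslice : ∀ i : Fin c, ∀ B : Finset ℝ,
      B ⊆ ((Finset.univ.image fun α => p α i) ∪ (Finset.univ.image fun α => q α i)) →
      B.card = K₀ →
      (⋂ r ∈ B, φ '' {x : BigCube c | x.1 i = r}) = ∅) :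
    ∃ y, IsStableValue (restrictToUnitCube φ) y := by
  set g := restrictToUnitCube φ with hg
  have hgc : Continuous g := by
    apply hφ.comp
    exact Continuous.subtype_mk continuous_subtype_val _
  apply hlight g hgc
  intro y x hx
  by_contra hnot
  rw [not_lt] at hnot
  set C := connectedComponentIn (g ⁻¹' {y}) x with hC
  set S := (Subtype.val : UnitCube c → _) '' C with hS
  have hxC : x ∈ C := mem_connectedComponentIn hx
  have hCfib : C ⊆ g ⁻¹' {y} := connectedComponentIn_subset _ _
  have hconn : IsPreconnected S :=
    (isPreconnected_connectedComponentIn).image _ continuous_subtype_val.continuousOn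
  have hdS : EMetric.diam S = EMetric.diam C := isometry_subtype_coe.ediam_image C
  obtain ⟨I, hcard, hint, hdisj⟩ := hcover x.1 x.2
  -- for each α ∈ I, S meets the frontier of box α
  have key : ∀ α ∈ I, ∃ z ∈ S, ∃ i : Fin c, z i = p α i ∨ z i = q α i := by
    intro α hα
    have hnsub : ¬ S ⊆ closedBox (p α) (q α) := by
      intro hsub
      have h1 : EMetric.diam S ≤ EMetric.diam (closedBox (p α) (q α)) := EMetric.diam_mono hsub
      have h2 := hdiam α
      rw [hdS] at h1
      exact absurd (lt_of_le_of_lt h1 h2) (not_lt.2 hnot)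
    obtain ⟨b, hbS, hbU⟩ := Set.not_subset.1 hnsub
    obtain ⟨z, hzS, hzF⟩ := preconnected_inter_frontier hconn (myClosedBox_isClosed _ _)
      (Set.mem_image_of_mem _ hxC) (hint α hα) hbS hbU
    obtain ⟨-, i, hi⟩ := mem_frontier_closedBox hzF
    exact ⟨z, hzS, i, hi⟩
  have : Nonempty (Fin c) := ⟨⟨0, by omega⟩⟩
  choose! z hzS i hzi using key
  -- pigeonhole on coordinates
  have hpig : ∃ j ∈ (Finset.univ : Finset (Fin c)),
      K₀ < (I.filter fun α => i α = j).card := by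
    apply Finset.exists_lt_card_fiber_of_mul_lt_card_of_maps_to
    · intro α _; exact Finset.mem_univ _
    · simpa using lt_of_lt_of_le (Nat.lt_succ_self (c * K₀)) hcard
  obtain ⟨j, -, hj⟩ := hpig
  set J := I.filter fun α => i α = j with hJ
  have hJI : J ⊆ I := Finset.filter_subset _ _
  have hzj : ∀ α ∈ J, z α j = p α j ∨ z α j = q α j := by
    intro α hα
    have h1 := hzi α (hJI hα)
    have h2 : i α = j := (Finset.mem_filter.1 hα).2
    rwa [h2] at h1
  -- injectivity of the endpoint values
  have hinj : Set.InjOn (fun α => z α j) J := by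
    intro α hα β hβ hab'
    have hab : z α j = z β j := hab'
    by_contra hne
    rcases hzj α hα with h1 | h1 <;> rcases hzj β hβ with h2 | h2 <;>
      rw [h1, h2] at hab
    · exact ((hdistinct j α β).1 hne).1 hab
    · exact (hdistinct j α β).2 hab
    · exact (hdistinct j β α).2 hab.symm
    · exact ((hdistinct j α β).1 hne).2 hab
  set B := J.image fun α => z α j with hB
  have hBcard : K₀ < B.card := by
    rw [hB, Finset.card_image_of_injOn hinj]; exact hj
  obtain ⟨B', hB'sub, hB'card⟩ := Finset.exists_subset_card_eq hBcard.le
  have hB'mem : B' ⊆ ((Finset.univ.image fun α => p α j) ∪ (Finset.univ.image fun α => q α j)) := by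
    intro b hb
    obtain ⟨α, hα, rfl⟩ := Finset.mem_image.1 (hB'sub hb)
    rcases hzj α hα with h | h <;> rw [h] <;> rw [Finset.mem_union]
    · exact Or.inl (Finset.mem_image.2 ⟨α, Finset.mem_univ _, rfl⟩)
    · exact Or.inr (Finset.mem_image.2 ⟨α, Finset.mem_univ _, rfl⟩)
  have hempty := hslice j B' hB'mem hB'card
  have hymem : y ∈ ⋂ r ∈ B', φ '' {x : BigCube c | x.1 j = r} := by
    rw [Set.mem_iInter₂]
    intro r hr
    obtain ⟨α, hα, rfl⟩ := Finset.mem_image.1 (hB'sub hr)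
    obtain ⟨w, hwC, hwz⟩ := hzS α (hJI hα)
    refine ⟨⟨w.1, fun i => ⟨by linarith [(w.2 i).1], by linarith [(w.2 i).2]⟩⟩, ?_, ?_⟩
    · show w.1 j = z α j
      rw [hwz]
    · exact hCfib hwC
  rw [hempty] at hymem
  exact hymem
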